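/- arXiv:2308.12484 — 3 statements merged into one kernel-verified Lean document; each statement's English description precedes it below -/
import Mathlib

section
/- The trigonometric R-matrix R(u,v) and its partially transposed version R^{t}(u^{-1},v) commute: R(u,v)\,R^{t}(u^{-1},v) = R^{t}(u^{-1},v)\,R(u,v), where R^{t}(u,v) is obtained from R(u,v) by transposing the first tensor factor. -/
open Matrix Kronecker
set_option synthInstance.maxHeartbeats 1000000
set_option maxHeartbeats 1000000
set_option maxSynthPendingDepth 5

/-- The field ℂ(q,u,v) of rational functions in three variables. -/
noncomputable abbrev Kquv := RatFunc (RatFunc (RatFunc ℂ))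

noncomputable def qv : Kquv := RatFunc.C (RatFunc.C RatFunc.X)
noncomputable def uv : Kquv := RatFunc.C RatFunc.X
noncomputable def vv : Kquv := RatFunc.X

/-- The trigonometric R-matrix `R(u,v)`. -/
noncomputable def Rm (n : ℕ) (q u v : Kquv) :
    Matrix (Fin n × Fin n) (Fin n × Fin n) Kquv :=
  (u - v) • (∑ i : Fin n, ∑ j : Fin n, if i ≠ j then
      (Matrix.single i i (1 : Kquv)) ⊗ₖ (Matrix.single j j 1) else 0)
  + (q⁻¹ * u - q * v) • (∑ i : Fin n,
      (Matrix.single i i (1 : Kquv)) ⊗ₖ (Matrix.single i i 1))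
  + ((q⁻¹ - q) * u) • (∑ i : Fin n, ∑ j : Fin n, if j < i then
      (Matrix.single i j (1 : Kquv)) ⊗ₖ (Matrix.single j i 1) else 0)
  + ((q⁻¹ - q) * v) • (∑ i : Fin n, ∑ j : Fin n, if i < j then
      (Matrix.single i j (1 : Kquv)) ⊗ₖ (Matrix.single j i 1) else 0)

/-- `Rᵗ(u,v)`: the R-matrix with the first tensor factor transposed. -/
noncomputable def Rmt (n : ℕ) (q u v : Kquv) :
    Matrix (Fin n × Fin n) (Fin n × Fin n) Kquv :=
  (u - v) • (∑ i : Fin n, ∑ j : Fin n, if i ≠ j then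
      (Matrix.single i i (1 : Kquv)) ⊗ₖ (Matrix.single j j 1) else 0)
  + (q⁻¹ * u - q * v) • (∑ i : Fin n,
      (Matrix.single i i (1 : Kquv)) ⊗ₖ (Matrix.single i i 1))
  + ((q⁻¹ - q) * u) • (∑ i : Fin n, ∑ j : Fin n, if j < i then
      (Matrix.single j i (1 : Kquv)) ⊗ₖ (Matrix.single j i 1) else 0)
  + ((q⁻¹ - q) * v) • (∑ i : Fin n, ∑ j : Fin n, if i < j then
      (Matrix.single j i (1 : Kquv)) ⊗ₖ (Matrix.single j i 1) else 0)

lemma mySumCollapse {n : ℕ} (f : Fin n → Fin n → Kquv) (a b : Fin n)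
    (h : ∀ x y, ¬(x = a ∧ y = b) → f x y = 0) :
    (∑ x : Fin n, ∑ y : Fin n, f x y) = f a b := by
  rw [Finset.sum_eq_single a]
  · rw [Finset.sum_eq_single b]
    · intro y _ hy
      exact h a y (by tauto)
    · intro hb; exact absurd (Finset.mem_univ b) hb
  · intro x _ hx
    exact Finset.sum_eq_zero fun y _ => h x y (by tauto)
  · intro ha; exact absurd (Finset.mem_univ a) ha

lemma Rm_apply (n : ℕ) (q u v : Kquv) (a b c d : Fin n) :
    Rm n q u v (a, b) (c, d) =
      (if a = c ∧ b = d ∧ a ≠ b then u - v else 0)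
    + (if a = b ∧ a = c ∧ a = d then q⁻¹ * u - q * v else 0)
    + (if b = c ∧ a = d ∧ b < a then (q⁻¹ - q) * u else 0)
    + (if b = c ∧ a = d ∧ a < b then (q⁻¹ - q) * v else 0) := by
  simp only [Rm, Matrix.add_apply, Matrix.smul_apply, Matrix.sum_apply,
    Matrix.zero_apply, apply_ite (fun M : Matrix (Fin n × Fin n) (Fin n × Fin n) Kquv => M (a,b) (c,d)),
    kroneckerMap_apply, Matrix.single, Matrix.of_apply, smul_eq_mul]
  rw [mySumCollapse _ a b (by intro x y hxy; split_ifs <;> simp_all),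
      Finset.sum_eq_single a (fun x _ hx => by simp [hx]) (fun h => absurd (Finset.mem_univ a) h),
      mySumCollapse _ a b (by intro x y hxy; split_ifs <;> simp_all),
      mySumCollapse _ a b (by intro x y hxy; split_ifs <;> simp_all)]
  simp only [and_self, true_and, eq_self_iff_true, mul_ite, mul_one, mul_zero, ite_mul, one_mul, zero_mul]
  split_ifs <;> simp_all <;> omega

lemma Rmt_apply (n : ℕ) (q u v : Kquv) (a b c d : Fin n) :
    Rmt n q u v (a, b) (c, d) =
      (if a = c ∧ b = d ∧ a ≠ b then u - v else 0)
    + (if a = b ∧ a = c ∧ a = d then q⁻¹ * u - q * v else 0)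
    + (if a = b ∧ c = d ∧ a < c then (q⁻¹ - q) * u else 0)
    + (if a = b ∧ c = d ∧ c < a then (q⁻¹ - q) * v else 0) := by
  simp only [Rmt, Matrix.add_apply, Matrix.smul_apply, Matrix.sum_apply,
    Matrix.zero_apply, apply_ite (fun M : Matrix (Fin n × Fin n) (Fin n × Fin n) Kquv => M (a,b) (c,d)),
    kroneckerMap_apply, Matrix.single, Matrix.of_apply, smul_eq_mul]
  rw [mySumCollapse _ a b (by intro x y hxy; split_ifs <;> simp_all),
      Finset.sum_eq_single a (fun x _ hx => by simp [hx]) (fun h => absurd (Finset.mem_univ a) h),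
      mySumCollapse _ c a (by intro x y hxy; split_ifs <;> simp_all),
      mySumCollapse _ c a (by intro x y hxy; split_ifs <;> simp_all)]
  simp only [and_self, true_and, eq_self_iff_true, mul_ite, mul_one, mul_zero, ite_mul, one_mul, zero_mul]
  split_ifs <;> simp_all <;> omega

lemma mulL (n : ℕ) (q u v : Kquv) (a b : Fin n) (N : Fin n → Fin n → Kquv) :
    (∑ e : Fin n, ∑ f : Fin n, Rm n q u v (a, b) (e, f) * N e f) =
      ((if a ≠ b then u - v else 0) + (if a = b then q⁻¹ * u - q * v else 0)) * N a b
    + ((if b < a then (q⁻¹ - q) * u else 0) + (if a < b then (q⁻¹ - q) * v else 0)) * N b a := by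
  simp only [Rm_apply, add_mul, Finset.sum_add_distrib]
  rw [mySumCollapse (fun x y => (if a = x ∧ b = y ∧ a ≠ b then u - v else 0) * N x y) a b
        (by intro x y hxy; split_ifs <;> simp_all <;> omega),
      mySumCollapse (fun x y => (if a = b ∧ a = x ∧ a = y then q⁻¹ * u - q * v else 0) * N x y) a b
        (by intro x y hxy; split_ifs <;> simp_all <;> omega),
      mySumCollapse (fun x y => (if b = x ∧ a = y ∧ b < a then (q⁻¹ - q) * u else 0) * N x y) b a
        (by intro x y hxy; split_ifs <;> simp_all <;> omega),
      mySumCollapse (fun x y => (if b = x ∧ a = y ∧ a < b then (q⁻¹ - q) * v else 0) * N x y) b a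
        (by intro x y hxy; split_ifs <;> simp_all <;> omega)]
  simp only [and_self, true_and]
  split_ifs <;> first | ring | simp_all | omega

lemma mulR (n : ℕ) (q u v : Kquv) (c d : Fin n) (M : Fin n → Fin n → Kquv) :
    (∑ e : Fin n, ∑ f : Fin n, M e f * Rm n q u v (e, f) (c, d)) =
      M c d * ((if c ≠ d then u - v else 0) + (if c = d then q⁻¹ * u - q * v else 0))
    + M d c * ((if c < d then (q⁻¹ - q) * u else 0) + (if d < c then (q⁻¹ - q) * v else 0)) := by
  simp only [Rm_apply, mul_add, Finset.sum_add_distrib]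
  rw [mySumCollapse (fun x y => M x y * (if x = c ∧ y = d ∧ x ≠ y then u - v else 0)) c d
        (by intro x y hxy; split_ifs <;> simp_all <;> omega),
      mySumCollapse (fun x y => M x y * (if x = y ∧ x = c ∧ x = d then q⁻¹ * u - q * v else 0)) c d
        (by intro x y hxy; split_ifs <;> simp_all <;> omega),
      mySumCollapse (fun x y => M x y * (if y = c ∧ x = d ∧ y < x then (q⁻¹ - q) * u else 0)) d c
        (by intro x y hxy; split_ifs <;> simp_all <;> omega),
      mySumCollapse (fun x y => M x y * (if y = c ∧ x = d ∧ x < y then (q⁻¹ - q) * v else 0)) d c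
        (by intro x y hxy; split_ifs <;> simp_all <;> omega)]
  simp only [and_self, true_and]
  split_ifs <;> first | ring | simp_all | omega


/-- `R(u,v)` and `Rᵗ(u⁻¹,v)` commute. -/
theorem R_Rt_commute (n : ℕ) (hn : 1 ≤ n) :
    Rm n qv uv vv * Rmt n qv uv⁻¹ vv = Rmt n qv uv⁻¹ vv * Rm n qv uv vv := by
  ext ⟨a, b⟩ ⟨c, d⟩
  rw [Matrix.mul_apply, Matrix.mul_apply, Fintype.sum_prod_type, Fintype.sum_prod_type]
  rw [mulL n qv uv vv a b (fun e f => Rmt n qv uv⁻¹ vv (e, f) (c, d)),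
      mulR n qv uv vv c d (fun e f => Rmt n qv uv⁻¹ vv (a, b) (e, f))]
  simp only [Rmt_apply]
  rcases eq_or_ne a b with rfl | hab <;> rcases eq_or_ne c d with rfl | hcd <;>
    simp_all only [ne_eq, not_true_eq_false, false_and, and_false, if_false, not_false_eq_true,
      true_and, and_true, if_true, lt_irrefl, and_self, zero_mul, mul_zero, add_zero, zero_add,
      ite_false, ite_true] <;>
    split_ifs <;> first | omega | ring1 | simp_all
end

section
/- Suppose, in an associative algebra of formal series, the generating series d_1(u), e(v), f(v) satisfy relations (5.4) and (5.5) of the paper: (1-q^2)(1-q^2uv)u\,d_1(u)e(u) - (1-q^2uv)(u-q^2v)\,d_1(u)e(v) = -q^2(u-v)(1-uv)\,e(v)d_1(u) - q(1-q^2)(u-v)\,f(u)d_1(u), and quv(1-q^2)(u-v)\,d_1(u)e(u) + q^2(u-v)(1-uv)\,d_1(u)f(v) = (u-q^2v)(1-q^2uv)\,f(v)d_1(u) - v(1-q^2)(1-q^2uv)\,f(u)d_1(u). Define \mathcal{E}(v) = e(vq^{-1}) and \mathcal{F}(v) = q f(v^{-1}q^{-1}). Then d_1(u)\big(\mathcal{E}(v)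 - \mathcal{F}(v)\big) = \frac{(1-q^{-1}uv)(1-quv^{-1})}{(1-quv)(1-q^{-1}uv^{-1})}\big(\mathcal{E}(v) - \mathcal{F}(v)\big) d_1(u). -/
set_option maxHeartbeats 1000000 in
/-- Lemma 5.4 (first identity) of the paper: given the generating-series
relations (5.4) and (5.5) of the rank-1 twisted q-Yangian (read off pointwise
at all values of the formal parameters), with `𝓔(v) = e(vq⁻¹)` and
`𝓕(v) = q·f(v⁻¹q⁻¹)`, one has
`d₁(u)(𝓔(v) - 𝓕(v)) = ((1-q⁻¹uv)(1-quv⁻¹))/((1-quv)(1-q⁻¹uv⁻¹)) · (𝓔(v)-𝓕(v)) d₁(u)`. -/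
theorem d1_commutation {F : Type*} [Field F] {A : Type*} [Ring A] [Algebra F A]
    (q : F) (hq : q ≠ 0) (d1' e' f' : F → A)
    (h54 : ∀ u v : F,
      ((1 - q ^ 2) * (1 - q ^ 2 * u * v) * u) • (d1' u * e' u)
        - ((1 - q ^ 2 * u * v) * (u - q ^ 2 * v)) • (d1' u * e' v)
      = (-(q ^ 2 * (u - v) * (1 - u * v))) • (e' v * d1' u)
        - (q * (1 - q ^ 2) * (u - v)) • (f' u * d1' u))
    (h55 : ∀ u v : F,
      (q * u * v * (1 - q ^ 2) * (u - v)) • (d1' u * e' u)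
        + (q ^ 2 * (u - v) * (1 - u * v)) • (d1' u * f' v)
      = ((u - q ^ 2 * v) * (1 - q ^ 2 * u * v)) • (f' v * d1' u)
        - (v * (1 - q ^ 2) * (1 - q ^ 2 * u * v)) • (f' u * d1' u))
    (u v : F) (hu : u ≠ 0) (hv : v ≠ 0)
    (hden : (1 - q * u * v) * (1 - q⁻¹ * u * v⁻¹) ≠ 0) :
    d1' u * (e' (v * q⁻¹) - q • f' (v⁻¹ * q⁻¹))
      = (((1 - q⁻¹ * u * v) * (1 - q * u * v⁻¹)) /
          ((1 - q * u * v) * (1 - q⁻¹ * u * v⁻¹))) •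
        ((e' (v * q⁻¹) - q • f' (v⁻¹ * q⁻¹)) * d1' u) := by
  have h1 := h54 u (v * q⁻¹)
  have h2 := h55 u (v⁻¹ * q⁻¹)
  have h1uv : (1 - q * u * v) ≠ 0 := left_ne_zero_of_mul hden
  have h2uv : (1 - q⁻¹ * u * v⁻¹) ≠ 0 := right_ne_zero_of_mul hden
  have hqvu : q * v - u ≠ 0 := fun h => h2uv (by rw [← sub_eq_zero.mp h]; field_simp; exact sub_self _)
  have hK : q * (1 - q * u * v) * ((1 - q * u * v) * (1 - q⁻¹ * u * v⁻¹)) ≠ 0 :=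
    mul_ne_zero (mul_ne_zero hq h1uv) hden
  -- the combination of the two relations with the chosen coefficients
  have comb :
      (-(q * u - v⁻¹)) • (((1 - q ^ 2) * (1 - q ^ 2 * u * (v * q⁻¹)) * u) • (d1' u * e' u)
          - ((1 - q ^ 2 * u * (v * q⁻¹)) * (u - q ^ 2 * (v * q⁻¹))) • (d1' u * e' (v * q⁻¹)))
        + (q * (1 - q * u * v) * v) •
            ((q * u * (v⁻¹ * q⁻¹) * (1 - q ^ 2) * (u - v⁻¹ * q⁻¹)) • (d1' u * e' u)
              + (q ^ 2 * (u - v⁻¹ * q⁻¹) * (1 - u * (v⁻¹ * q⁻¹))) • (d1' u * f' (v⁻¹ * q⁻¹)))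
      = (-(q * u - v⁻¹)) • ((-(q ^ 2 * (u - v * q⁻¹) * (1 - u * (v * q⁻¹)))) • (e' (v * q⁻¹) * d1' u)
            - (q * (1 - q ^ 2) * (u - v * q⁻¹)) • (f' u * d1' u))
        + (q * (1 - q * u * v) * v) •
            (((u - q ^ 2 * (v⁻¹ * q⁻¹)) * (1 - q ^ 2 * u * (v⁻¹ * q⁻¹))) • (f' (v⁻¹ * q⁻¹) * d1' u)
              - (v⁻¹ * q⁻¹ * (1 - q ^ 2) * (1 - q ^ 2 * u * (v⁻¹ * q⁻¹))) • (f' u * d1' u)) := by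
    rw [h1, h2]
  have hz := sub_eq_zero.mpr comb
  have main :
      (q * (1 - q * u * v) * ((1 - q * u * v) * (1 - q⁻¹ * u * v⁻¹))) •
          (d1' u * (e' (v * q⁻¹) - q • f' (v⁻¹ * q⁻¹)))
        - (q * (1 - q * u * v) * ((1 - q * u * v) * (1 - q⁻¹ * u * v⁻¹))) •
            ((((1 - q⁻¹ * u * v) * (1 - q * u * v⁻¹)) /
                ((1 - q * u * v) * (1 - q⁻¹ * u * v⁻¹))) •
              ((e' (v * q⁻¹) - q • f' (v⁻¹ * q⁻¹)) * d1' u))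
        = 0 := by
    rw [show d1' u * (e' (v * q⁻¹) - q • f' (v⁻¹ * q⁻¹))
          = d1' u * e' (v * q⁻¹) - q • (d1' u * f' (v⁻¹ * q⁻¹)) from by
        rw [mul_sub, mul_smul_comm],
      show (e' (v * q⁻¹) - q • f' (v⁻¹ * q⁻¹)) * d1' u
          = e' (v * q⁻¹) * d1' u - q • (f' (v⁻¹ * q⁻¹) * d1' u) from by
        rw [sub_mul, smul_mul_assoc]]
    rw [← hz]
    match_scalars <;> field_simp <;> ring
  have h' := congrArg
    ((q * (1 - q * u * v) * ((1 - q * u * v) * (1 - q⁻¹ * u * v⁻¹)))⁻¹ • ·)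
    (sub_eq_zero.mp main)
  simpa only [inv_smul_smul₀ hK] using h'
end

section
/- In the 2\times 2 twisted q-Yangian setting, suppose an associative algebra contains invertible commuting series d_1(u), d_2(u) and series e(u), f(u) such that relations (5.7) and (5.8) of the paper hold: (u-v)(1-q^4 uv)\,\tilde{d}_2(v) e(u) - q(1-q^2)(u-v)\,\tilde{d}_2(v) f(v) = (u-q^2 v)(1-q^2 uv)\, e(u)\tilde{d}_2(v) - (1-q^2)(1-q^2 uv) v\, e(v)\tilde{d}_2(v), and u(1-q^2)(1-q^2 uv)\,\tilde{d}_2(v) f(v) - (u-q^2 v)(1-q^2 uv)\,\tilde{d}_2(v) f(u) = quv(1-q^2)(u-v)\, e(v)\tilde{d}_2(v) - (u-v)(1-q^4 uv)\, f(u)\tilde{d}_2(v). With \mathcal{E}(v) = e(vq^{-1}), \mathcal{F}(v) = q f(v^{-1}q^{-1}), conclude \tilde{d}_2(u)\big(\mathcal{E}(v) - \mathcal{F}(v)\big) = \frac{(1-quv)(1-q^3 uv^{-1})}{(1-q^3 uv)(1-quv^{-1})}\big(\mathcal{E}(v) - \mathcal{F}(v)\big)\tilde{d}_2(u). -/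
/-- Lemma 5.4 (second identity) of the paper: in the rank-1 twisted q-Yangian,
with invertible commuting series `d₁(u), d₂(u)` (`d̃₂ = d₂⁻¹`) and series
`e(u), f(u)` satisfying relations (5.7) and (5.8) (read pointwise in the formal
parameters), and with `𝓔(v) = e(vq⁻¹)`, `𝓕(v) = q·f(v⁻¹q⁻¹)`, one has
`d̃₂(u)(𝓔(v)-𝓕(v)) = ((1-quv)(1-q³uv⁻¹))/((1-q³uv)(1-quv⁻¹)) · (𝓔(v)-𝓕(v)) d̃₂(u)`. -/
theorem d2_commutation {F : Type*} [Field F] {A : Type*} [Ring A] [Algebra F A]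
    (q : F) (hq : q ≠ 0) (d1' d2' td2' e' f' : F → A)
    (hinv : ∀ u : F, d2' u * td2' u = 1 ∧ td2' u * d2' u = 1)
    (hcomm : ∀ u v : F, d1' u * d2' v = d2' v * d1' u)
    (h57 : ∀ u v : F,
      ((u - v) * (1 - q ^ 4 * u * v)) • (td2' v * e' u)
        - (q * (1 - q ^ 2) * (u - v)) • (td2' v * f' v)
      = ((u - q ^ 2 * v) * (1 - q ^ 2 * u * v)) • (e' u * td2' v)
        - ((1 - q ^ 2) * (1 - q ^ 2 * u * v) * v) • (e' v * td2' v))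
    (h58 : ∀ u v : F,
      (u * (1 - q ^ 2) * (1 - q ^ 2 * u * v)) • (td2' v * f' v)
        - ((u - q ^ 2 * v) * (1 - q ^ 2 * u * v)) • (td2' v * f' u)
      = (q * u * v * (1 - q ^ 2) * (u - v)) • (e' v * td2' v)
        - ((u - v) * (1 - q ^ 4 * u * v)) • (f' u * td2' v))
    (u v : F) (hu : u ≠ 0) (hv : v ≠ 0)
    (hden : (1 - q ^ 3 * u * v) * (1 - q * u * v⁻¹) ≠ 0) :
    td2' u * (e' (v * q⁻¹) - q • f' (v⁻¹ * q⁻¹))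
      = (((1 - q * u * v) * (1 - q ^ 3 * u * v⁻¹)) /
          ((1 - q ^ 3 * u * v) * (1 - q * u * v⁻¹))) •
        ((e' (v * q⁻¹) - q • f' (v⁻¹ * q⁻¹)) * td2' u) := by
  set P : F := (1 - q ^ 3 * u * v) * (1 - q * u * v⁻¹) with hPdef
  set Q : F := (1 - q * u * v) * (1 - q ^ 3 * u * v⁻¹) with hQdef
  have eq1 := h57 (v * q⁻¹) u
  have eq2 := h58 (v⁻¹ * q⁻¹) u
  have key : P • (td2' u * (e' (v * q⁻¹) - q • f' (v⁻¹ * q⁻¹)))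
      = Q • ((e' (v * q⁻¹) - q • f' (v⁻¹ * q⁻¹)) * td2' u) := by
    simp only [mul_sub, sub_mul, smul_mul_assoc, mul_smul_comm, smul_sub, smul_smul,
      hPdef, hQdef]
    linear_combination (norm := match_scalars <;> field_simp <;> ring)
      (q * v⁻¹) • eq1 + (q ^ 2 * v) • eq2
  calc td2' u * (e' (v * q⁻¹) - q • f' (v⁻¹ * q⁻¹))
      = P⁻¹ • (P • (td2' u * (e' (v * q⁻¹) - q • f' (v⁻¹ * q⁻¹)))) := by
        rw [smul_smul, inv_mul_cancel₀ hden, one_smul]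
    _ = P⁻¹ • (Q • ((e' (v * q⁻¹) - q • f' (v⁻¹ * q⁻¹)) * td2' u)) := by rw [key]
    _ = (Q / P) • ((e' (v * q⁻¹) - q • f' (v⁻¹ * q⁻¹)) * td2' u) := by
        rw [smul_smul, div_eq_inv_mul]
end
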